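/- Let δ > 0 and define (p_n) by p₀ = 1+δ, p_{n+1} = 1+δ − 1/(1+δ+p_n); set N := ⌊δ^{−1/2}⌋. There exist constants C > 0 and δ₀ ∈ (0,1) such that for all δ ∈ (0,δ₀) and all integers n with 0 ≤ n ≤ N one has |p_n − 1/(n+1)| ≤ C·√δ. -/

import Mathlib

open Real

theorem stmt_6 :
    ∃ C > (0:ℝ), ∃ δ₀ ∈ Set.Ioo (0:ℝ) 1, ∀ δ ∈ Set.Ioo (0:ℝ) δ₀,
      ∀ p : ℕ → ℝ, p 0 = 1 + δ →
        (∀ n, p (n + 1) = 1 + δ - 1 / (1 + δ + p n)) →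
        ∀ n : ℕ, n ≤ ⌊δ ^ (-(1:ℝ)/2)⌋₊ →
          |p n - 1 / ((n : ℝ) + 1)| ≤ C * Real.sqrt δ := by
  refine ⟨3, by norm_num, 1/2, by norm_num, ?_⟩
  rintro δ ⟨hδ0, hδ1⟩ p hp0 hrec n hn
  have key : ∀ m : ℕ, 0 ≤ p m - 1/((m:ℝ)+1) ∧
      p m - 1/((m:ℝ)+1) ≤ (2*(m:ℝ)+1)*δ := by
    intro m
    induction m with
    | zero =>
      simp only [Nat.cast_zero, hp0]
      constructor <;> nlinarith
    | succ k ih =>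
      obtain ⟨h1, h2⟩ := ih
      set e := p k - 1/((k:ℝ)+1) with he
      clear_value e
      have hk1 : (0:ℝ) < (k:ℝ)+1 := by positivity
      have hk2 : (0:ℝ) < (k:ℝ)+2 := by positivity
      have hD : 1+δ+p k = ((k:ℝ)+2)/((k:ℝ)+1) + (δ + e) := by
        rw [he]; field_simp; ring
      have ha1 : (1:ℝ) ≤ ((k:ℝ)+2)/((k:ℝ)+1) := by
        rw [le_div_iff₀ hk1]; linarith
      have hDpos : (1:ℝ) < 1+δ+p k := by
        rw [hD]; linarith
      have hDne : 1+δ+p k ≠ 0 := by linarith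
      have hid : p (k+1) - 1/(((k:ℕ)+1:ℝ)+1)
          = δ + (δ+e) * ((k:ℝ)+1) / (((k:ℝ)+2) * (1+δ+p k)) := by
        rw [hrec k, he]
        field_simp
        ring
      have hFpos : 0 ≤ (δ+e) * ((k:ℝ)+1) / (((k:ℝ)+2) * (1+δ+p k)) := by
        apply div_nonneg
        · nlinarith
        · nlinarith
      have hstep : (k:ℝ)+1 ≤ ((k:ℝ)+2) * (1+δ+p k) := by nlinarith
      have hFle : (δ+e) * ((k:ℝ)+1) / (((k:ℝ)+2) * (1+δ+p k)) ≤ δ + e := by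
        rw [div_le_iff₀ (by nlinarith)]
        exact mul_le_mul_of_nonneg_left hstep (by nlinarith)
      constructor
      · push_cast
        push_cast at hid
        rw [hid]
        linarith
      · push_cast
        push_cast at hid
        rw [hid]
        have hexp : (2*((k:ℝ)+1)+1)*δ = (2*(k:ℝ)+1)*δ + 2*δ := by ring
        linarith
  obtain ⟨h1, h2⟩ := key n
  rw [abs_of_nonneg h1]
  have hsq : Real.sqrt δ * Real.sqrt δ = δ := Real.mul_self_sqrt hδ0.le
  have hs0 : 0 < Real.sqrt δ := Real.sqrt_pos.2 hδ0
  have hs1 : Real.sqrt δ < 1 := by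
    rw [show (1:ℝ) = Real.sqrt 1 by simp]
    exact Real.sqrt_lt_sqrt hδ0.le (by linarith)
  have hne : (n:ℝ) ≤ δ ^ (-(1:ℝ)/2) := by
    exact_mod_cast le_trans (Nat.cast_le.2 hn) (Nat.floor_le (by positivity))
  have hrpow : δ ^ (-(1:ℝ)/2) = (Real.sqrt δ)⁻¹ := by
    rw [show (-(1:ℝ)/2) = -(1/2) by ring, Real.rpow_neg hδ0.le,
      ← Real.sqrt_eq_rpow]
  rw [hrpow] at hne
  have hnδ : (n:ℝ) * δ ≤ Real.sqrt δ := by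
    have h := mul_le_mul_of_nonneg_right hne hδ0.le
    have hi : (Real.sqrt δ)⁻¹ * δ = Real.sqrt δ := by
      field_simp
      rw [Real.sq_sqrt hδ0.le]
    linarith [hi ▸ h]
  have hδs : δ ≤ Real.sqrt δ := by nlinarith
  nlinarith
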